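/- Let A be a finite-dimensional ℤ/2ℤ-graded associative algebra over a field of characteristic zero with an odd invariant scalar product g, and let (e_μ), (e^μ) be homogeneous dual bases with g(e^μ, e_ν) = δ^μ_ν. Then for all homogeneous a, b ∈ A: Σ_μ (−1)^{|e^μ|(|a|+1)} e^μ·a·e_μ·b = (−1)^{(|a|+1)|b|} · b · Σ_μ (−1)^{|e^μ|(|a|+1)} e^μ·a·e_μ. -/

import Mathlib

/-- A finite-dimensional ℤ/2ℤ-graded associative algebra `A = A₀ ⊕ A₁` (possibly
non-unital) with an odd invariant scalar product `g`: `g` is non-degenerate, vanishes on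
`A₀ × A₀` and `A₁ × A₁`, is invariant (`g(ab,c) = g(a,bc)`) and supersymmetric (which,
given the vanishing on equal parities, amounts to plain symmetry). -/
structure OddFrob (k A : Type*) [Field k] [NonUnitalRing A] [Module k A]
    [SMulCommClass k A A] [IsScalarTower k A A] where
  A0 : Submodule k A
  A1 : Submodule k A
  compl : IsCompl A0 A1
  mul00 : ∀ x ∈ A0, ∀ y ∈ A0, x * y ∈ A0
  mul01 : ∀ x ∈ A0, ∀ y ∈ A1, x * y ∈ A1
  mul10 : ∀ x ∈ A1, ∀ y ∈ A0, x * y ∈ A1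
  mul11 : ∀ x ∈ A1, ∀ y ∈ A1, x * y ∈ A0
  g : A →ₗ[k] A →ₗ[k] k
  nondeg : ∀ x, (∀ y, g x y = 0) → x = 0
  zero00 : ∀ x ∈ A0, ∀ y ∈ A0, g x y = 0
  zero11 : ∀ x ∈ A1, ∀ y ∈ A1, g x y = 0
  invar : ∀ x y z, g (x * y) z = g x (y * z)
  symm : ∀ x y, g x y = g y x

variable {k A : Type*} [Field k] [NonUnitalRing A] [Module k A]
  [SMulCommClass k A A] [IsScalarTower k A A]

/-- `a` is homogeneous of parity `p` (mod 2). -/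
def OddFrob.Homog (S : OddFrob k A) (p : ℕ) (a : A) : Prop :=
  if p % 2 = 0 then a ∈ S.A0 else a ∈ S.A1

/-- Homogeneous dual bases `(e_μ)`, `(e^μ)` of `A`: `e^μ = f μ` is homogeneous of parity
`q μ`, `e_μ = e μ` of the opposite parity, and `g(e^μ, e_ν) = δ^μ_ν`. -/
def OddFrob.DualBases (S : OddFrob k A) {ι : Type*} [Fintype ι] [DecidableEq ι]
    (e : Module.Basis ι k A) (f : ι → A) (q : ι → ℕ) : Prop :=
  (∀ μ, S.Homog (q μ) (f μ)) ∧ (∀ μ, S.Homog (q μ + 1) (e μ)) ∧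
  (∀ μ ν, S.g (f μ) (e ν) = if μ = ν then 1 else 0)

theorem aux_center
    (S : OddFrob k A) {ι : Type*} [Fintype ι]
    (e : Module.Basis ι k A) (f : ι → A)
    (hexp : ∀ c : A, ∑ ν, S.g (f ν) c • e ν = c)
    (s : ι → k) (ε : k) (a b : A)
    (hsign : ∀ μ ν, S.g (f ν) (e μ * b) ≠ 0 → s μ = ε * s ν) :
    ∑ μ, s μ • (f μ * a * e μ * b) = ε • (b * ∑ μ, s μ • (f μ * a * e μ)) := by
  have hkey : ∀ c : A,
      S.g (∑ μ, s μ • (f μ * a * e μ * b)) c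
        = S.g (ε • (b * ∑ μ, s μ • (f μ * a * e μ))) c := by
    intro c
    have h1 : S.g (∑ μ, s μ • (f μ * a * e μ * b)) c
        = ∑ μ, ∑ ν, s μ * (S.g (f ν) (e μ * b) * S.g (f μ) (a * (e ν * c))) := by
      rw [map_sum, LinearMap.sum_apply]
      refine Finset.sum_congr rfl fun μ _ => ?_
      rw [map_smul, LinearMap.smul_apply, smul_eq_mul, S.invar, S.invar, S.invar,
          ← mul_assoc (e μ) b c, ← hexp (e μ * b), Finset.sum_mul, Finset.mul_sum,
          map_sum, Finset.mul_sum]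
      rw [hexp (e μ * b)]
      refine Finset.sum_congr rfl fun ν _ => ?_
      rw [smul_mul_assoc, mul_smul_comm, map_smul, smul_eq_mul]
    have h2 : S.g (ε • (b * ∑ μ, s μ • (f μ * a * e μ))) c
        = ∑ μ, ∑ ν, ε * (s μ * (S.g (f ν) (a * (e μ * c)) * S.g (f μ) (e ν * b))) := by
      rw [map_smul, LinearMap.smul_apply, smul_eq_mul, Finset.mul_sum, map_sum,
        LinearMap.sum_apply, Finset.mul_sum]
      refine Finset.sum_congr rfl fun μ _ => ?_
      rw [mul_smul_comm, map_smul, LinearMap.smul_apply, smul_eq_mul,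
          S.invar, S.symm, S.invar, S.invar, S.invar,
          ← mul_assoc (e μ) c b, ← mul_assoc a (e μ * c) b, ← hexp (a * (e μ * c)),
          Finset.sum_mul, map_sum, Finset.mul_sum, Finset.mul_sum, hexp (a * (e μ * c))]
      refine Finset.sum_congr rfl fun ν _ => ?_
      rw [smul_mul_assoc, map_smul, smul_eq_mul]
    rw [h1, h2, Finset.sum_comm]
    refine Finset.sum_congr rfl fun μ _ => Finset.sum_congr rfl fun ν _ => ?_
    by_cases hG : S.g (f μ) (e ν * b) = 0
    · simp [hG]
    · rw [hsign ν μ hG]; ring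
  have h0 : (∑ μ, s μ • (f μ * a * e μ * b)) - ε • (b * ∑ μ, s μ • (f μ * a * e μ)) = 0 := by
    apply S.nondeg
    intro y
    rw [map_sub, LinearMap.sub_apply, hkey y, sub_self]
  exact sub_eq_zero.mp h0

theorem neg_one_pow_congr_mod (m n : ℕ) (h : m % 2 = n % 2) : ((-1 : k) ^ m = (-1) ^ n) := by
  conv_lhs => rw [← Nat.div_add_mod m 2]
  conv_rhs => rw [← Nat.div_add_mod n 2]
  simp [pow_add, pow_mul, h]

theorem neg_one_pow_mul_congr (m n t : ℕ) (h : (m + n) % 2 = 0) :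
    ((-1 : k) ^ (m * t) = (-1) ^ (n * t)) := by
  apply neg_one_pow_congr_mod
  rw [Nat.mul_mod, Nat.mul_mod n t, show m % 2 = n % 2 by omega]


/-- For homogeneous dual bases and homogeneous `a, b`:
`Σ_μ (−1)^{|e^μ|(|a|+1)} e^μ·a·e_μ·b = (−1)^{(|a|+1)|b|} b · Σ_μ (−1)^{|e^μ|(|a|+1)} e^μ·a·e_μ`. -/
theorem dual_bases_center_commutation
    {k A : Type*} [Field k] [CharZero k] [NonUnitalRing A] [Module k A]
    [SMulCommClass k A A] [IsScalarTower k A A] [FiniteDimensional k A]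
    (S : OddFrob k A) {ι : Type*} [Fintype ι] [DecidableEq ι]
    (e : Module.Basis ι k A) (f : ι → A) (q : ι → ℕ) (hdb : S.DualBases e f q)
    (pa pb : ℕ) (a b : A) (ha : S.Homog pa a) (hb : S.Homog pb b) :
    ∑ μ, (-1 : k) ^ (q μ * (pa + 1)) • (f μ * a * e μ * b) =
      (-1 : k) ^ ((pa + 1) * pb) •
        (b * ∑ μ, (-1 : k) ^ (q μ * (pa + 1)) • (f μ * a * e μ)) := by
  obtain ⟨hf, he, hge⟩ := hdb
  have hrepr : ∀ (c : A) (μ : ι), S.g (f μ) c = e.repr c μ := by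
    intro c μ
    conv_lhs => rw [← e.sum_repr c]
    rw [map_sum]
    simp [hge]
  have hexp : ∀ c : A, ∑ ν, S.g (f ν) c • e ν = c := by
    intro c
    simp_rw [hrepr]
    exact e.sum_repr c
  have hvanish : ∀ (p r : ℕ) (x y : A), S.Homog p x → S.Homog r y →
      (p + r) % 2 = 0 → S.g x y = 0 := by
    intro p r x y hx hy hpr
    rcases Nat.mod_two_eq_zero_or_one p with hp | hp <;>
      rcases Nat.mod_two_eq_zero_or_one r with hr | hr <;>
      simp only [OddFrob.Homog, hp, hr] at hx hy <;> norm_num at hx hy <;>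
      first
        | exact S.zero00 x hx y hy
        | exact S.zero11 x hx y hy
        | omega
  have hmulh : ∀ (p r : ℕ) (x y : A), S.Homog p x → S.Homog r y →
      S.Homog (p + r) (x * y) := by
    intro p r x y hx hy
    unfold OddFrob.Homog at hx hy ⊢
    rcases Nat.mod_two_eq_zero_or_one p with hp | hp <;>
      rcases Nat.mod_two_eq_zero_or_one r with hr | hr
    · rw [if_pos hp] at hx; rw [if_pos hr] at hy; rw [if_pos (by omega)]
      exact S.mul00 x hx y hy
    · rw [if_pos hp] at hx; rw [if_neg (by omega)] at hy; rw [if_neg (by omega)]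
      exact S.mul01 x hx y hy
    · rw [if_neg (by omega)] at hx; rw [if_pos hr] at hy; rw [if_neg (by omega)]
      exact S.mul10 x hx y hy
    · rw [if_neg (by omega)] at hx; rw [if_neg (by omega)] at hy; rw [if_pos (by omega)]
      exact S.mul11 x hx y hy
  apply aux_center S e f hexp
  intro μ ν hne
  have hpar : (q ν + (q μ + 1 + pb)) % 2 = 1 := by
    by_contra h
    exact hne (hvanish _ _ _ _ (hf ν) (hmulh _ _ _ _ (he μ) hb) (by omega))
  rw [← pow_add, show (pa + 1) * pb + q ν * (pa + 1) = (pb + q ν) * (pa + 1) by ring]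
  exact neg_one_pow_mul_congr _ _ _ (by omega)
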